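/- Let d be a positive integer, let 2 ≤ k ≤ n be integers, J := [[0_d, −1_d],[1_d, 0_d]], and let Γ be a permutation-invariant real symmetric matrix on ℝ^{2d} ⊗ ℝ^k with Γ ≥ i(J ⊗ 1_k), with on-site block A (i.e. Γ_{(α,i),(β,i)} = A_{αβ}) and inter-site block B (i.e. Γ_{(α,i),(β,j)} = B_{αβ} for i ≠ j). Then there exists a permutation-invariant real symmetric matrix Γ' on ℝ^{2d} ⊗ ℝ^n with Γ' ≥ i(J ⊗ 1_n) whose principal sub-block on the first k sites equals Γ, if and only if A + (n−1)B ≥ iJ. -/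

import Mathlib

open Kronecker Matrix
open scoped ComplexOrder

set_option linter.unusedSectionVars false
set_option maxHeartbeats 1000000

section Helpers

variable {V : Type*} [Fintype V] [DecidableEq V] {ι : Type*} [Fintype ι]

private lemma CM_dp_sum_left (f : ι → V → ℂ) (v : V → ℂ) :
    (∑ i, f i) ⬝ᵥ v = ∑ i, f i ⬝ᵥ v := by
  simp only [dotProduct, Finset.sum_apply, Finset.sum_mul]
  exact Finset.sum_comm

private lemma CM_dp_sum_right (v : V → ℂ) (f : ι → V → ℂ) :
    v ⬝ᵥ (∑ i, f i) = ∑ i, v ⬝ᵥ f i := by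
  simp only [dotProduct, Finset.sum_apply, Finset.mul_sum]
  exact Finset.sum_comm

private lemma CM_mv_sum (M : Matrix V V ℂ) (f : ι → V → ℂ) :
    M *ᵥ (∑ i, f i) = ∑ i, M *ᵥ f i := map_sum M.mulVecLin f Finset.univ

private lemma CM_sum_bilin {m : ℕ} (M : Matrix V V ℂ) (x : Fin m → V → ℂ) :
    star (∑ i, x i) ⬝ᵥ M *ᵥ (∑ i, x i) = ∑ i, ∑ j, star (x i) ⬝ᵥ M *ᵥ x j := by
  rw [star_sum, CM_dp_sum_left]
  refine Finset.sum_congr rfl fun i _ => ?_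
  rw [CM_mv_sum, CM_dp_sum_right]

private lemma CM_nonneg_of_mul {c : ℝ} (hc : 0 < c) {z : ℂ} (h : 0 ≤ (c : ℂ) * z) :
    0 ≤ z := by
  have h1 : (0 : ℂ) ≤ ((c⁻¹ : ℝ) : ℂ) := by
    rw [Complex.zero_le_real]; positivity
  have h2 := mul_nonneg h1 h
  rwa [← mul_assoc, ← Complex.ofReal_mul, inv_mul_cancel₀ hc.ne', Complex.ofReal_one,
    one_mul] at h2

private lemma CM_perm_entry {m : ℕ}
    (Γ : Matrix (V × Fin m) (V × Fin m) ℝ) (σ : Equiv.Perm (Fin m))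
    (α β : V) (i j : Fin m) :
    (((1 : Matrix V V ℝ) ⊗ₖ σ.permMatrix ℝ) * Γ *
      ((1 : Matrix V V ℝ) ⊗ₖ σ.permMatrix ℝ)ᵀ) (α, i) (β, j) = Γ (α, σ i) (β, σ j) := by
  simp [Matrix.mul_apply, Fintype.sum_prod_type, Equiv.Perm.permMatrix,
    PEquiv.toMatrix_apply, Equiv.toPEquiv, one_apply, ite_and, Finset.sum_ite_eq,
    Finset.sum_ite_eq', mul_comm]

private lemma CM_exists_perm_pair {m : ℕ} (i j i' j' : Fin m) (h : i ≠ j) (h' : i' ≠ j') :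
    ∃ σ : Equiv.Perm (Fin m), σ i = i' ∧ σ j = j' := by
  classical
  set τ := Equiv.swap i i' with hτ
  set j'' := τ.symm j' with hj''
  have hji : j'' ≠ i := by
    intro hc
    apply h'
    rw [← τ.apply_symm_apply j', ← hj'', hc, hτ, Equiv.swap_apply_left]
  refine ⟨τ * Equiv.swap j j'', ?_, ?_⟩
  · simp only [Equiv.Perm.mul_apply]
    rw [Equiv.swap_apply_of_ne_of_ne h (Ne.symm ?_), hτ, Equiv.swap_apply_left]
    exact hji
  · simp only [Equiv.Perm.mul_apply]
    rw [Equiv.swap_apply_left, hj'', Equiv.apply_symm_apply]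

private lemma CM_blockQF {m : ℕ}
    (S : Matrix (V × Fin m) (V × Fin m) ℂ) (M : Fin m → Fin m → Matrix V V ℂ)
    (hS : ∀ (α β : V) (i j : Fin m), S (α, i) (β, j) = M i j α β)
    (x : V × Fin m → ℂ) :
    star x ⬝ᵥ S *ᵥ x =
      ∑ i, ∑ j, star (fun α => x (α, i)) ⬝ᵥ (M i j) *ᵥ (fun β => x (β, j)) := by
  simp only [dotProduct, mulVec, Pi.star_apply, Fintype.sum_prod_type, hS,
    Finset.mul_sum]
  conv_lhs => rw [Finset.sum_comm]
  refine Finset.sum_congr rfl fun i _ => ?_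
  conv_rhs => rw [Finset.sum_comm]
  refine Finset.sum_congr rfl fun α _ => ?_
  exact Finset.sum_comm

private lemma CM_herm_sub (M K : Matrix V V ℝ) (hM : M.IsSymm) (hK : Kᵀ = -K) :
    (M.map Complex.ofReal - Complex.I • K.map Complex.ofReal).IsHermitian := by
  ext α β
  simp only [conjTranspose_apply, Matrix.sub_apply, Matrix.smul_apply, map_apply, smul_eq_mul]
  have hM' : M β α = M α β := by
    have := congrFun (congrFun hM.eq α) β
    simpa [transpose_apply] using this
  have hK' : K β α = -K α β := by
    have := congrFun (congrFun hK α) β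
    simpa [transpose_apply] using this
  simp [hM', hK', Complex.conj_ofReal]
  ring

private lemma CM_key_nonneg {m : ℕ} (hm : 0 < m)
    (C D Bc : Matrix V V ℂ) (hC : C.PosSemidef) (hD : D.PosSemidef)
    (hB : (m : ℂ) • Bc = D - C) (x : Fin m → V → ℂ) :
    0 ≤ ∑ i, ∑ j, star (x i) ⬝ᵥ (if i = j then C + Bc else Bc) *ᵥ x j := by
  classical
  set s : V → ℂ := ∑ i, x i with hs
  set Q : ℂ := ∑ i, ∑ j, star (x i) ⬝ᵥ (if i = j then C + Bc else Bc) *ᵥ x j with hQ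
  have hsplit : Q = (∑ i, star (x i) ⬝ᵥ C *ᵥ x i) + star s ⬝ᵥ Bc *ᵥ s := by
    have h1 : ∀ i, ∑ j, star (x i) ⬝ᵥ (if i = j then C + Bc else Bc) *ᵥ x j
        = (star (x i) ⬝ᵥ C *ᵥ x i) + ∑ j, star (x i) ⬝ᵥ Bc *ᵥ x j := by
      intro i
      have h2 : ∀ j, star (x i) ⬝ᵥ (if i = j then C + Bc else Bc) *ᵥ x j
          = (if i = j then star (x i) ⬝ᵥ C *ᵥ x j else 0) + star (x i) ⬝ᵥ Bc *ᵥ x j := by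
        intro j
        by_cases h : i = j
        · subst h; simp [Matrix.add_mulVec, dotProduct_add]
        · simp [h]
      simp only [h2, Finset.sum_add_distrib, Finset.sum_ite_eq, Finset.mem_univ, if_true]
    rw [hQ, hs]
    simp only [h1, Finset.sum_add_distrib, CM_sum_bilin]
  have hCq : ∀ y : V → ℂ, 0 ≤ star y ⬝ᵥ C *ᵥ y := Matrix.PosSemidef.dotProduct_mulVec_nonneg hC
  have hDq : 0 ≤ star s ⬝ᵥ D *ᵥ s := Matrix.PosSemidef.dotProduct_mulVec_nonneg hD s
  have hexp : ∀ i j, star (x i - x j) ⬝ᵥ C *ᵥ (x i - x j)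
      = star (x i) ⬝ᵥ C *ᵥ x i - star (x i) ⬝ᵥ C *ᵥ x j
        - star (x j) ⬝ᵥ C *ᵥ x i + star (x j) ⬝ᵥ C *ᵥ x j := by
    intro i j
    rw [star_sub, Matrix.mulVec_sub, sub_dotProduct, dotProduct_sub,
      dotProduct_sub]
    ring
  have hmB' : (m : ℂ) * (star s ⬝ᵥ Bc *ᵥ s)
      = star s ⬝ᵥ D *ᵥ s - star s ⬝ᵥ C *ᵥ s := by
    have h3 : star s ⬝ᵥ ((m : ℂ) • Bc) *ᵥ s = star s ⬝ᵥ D *ᵥ s - star s ⬝ᵥ C *ᵥ s := by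
      rw [hB, Matrix.sub_mulVec, dotProduct_sub]
    rw [← h3, Matrix.smul_mulVec, dotProduct_smul, smul_eq_mul]
  have hid : (2 * m : ℂ) * Q
      = 2 * (star s ⬝ᵥ D *ᵥ s) + ∑ i, ∑ j, star (x i - x j) ⬝ᵥ C *ᵥ (x i - x j) := by
    have e1 : ∑ i, ∑ j, star (x i - x j) ⬝ᵥ C *ᵥ (x i - x j)
        = 2 * (m : ℂ) * (∑ i, star (x i) ⬝ᵥ C *ᵥ x i) - 2 * (star s ⬝ᵥ C *ᵥ s) := by
      simp only [hexp]
      rw [hs, CM_sum_bilin]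
      simp only [Finset.sum_add_distrib, Finset.sum_sub_distrib, Finset.sum_const,
        Finset.card_univ, Fintype.card_fin, nsmul_eq_mul]
      rw [Finset.sum_comm (f := fun i j => star (x j) ⬝ᵥ C *ᵥ x i), ← Finset.mul_sum]
      ring
    rw [hsplit, e1]
    linear_combination (2 : ℂ) * hmB'
  have hsum : 0 ≤ ∑ i, ∑ j, star (x i - x j) ⬝ᵥ C *ᵥ (x i - x j) :=
    Finset.sum_nonneg fun i _ => Finset.sum_nonneg fun j _ => hCq _
  have h2Q : 0 ≤ (2 * m : ℂ) * Q := by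
    rw [hid]
    exact add_nonneg (mul_nonneg (by norm_num) hDq) hsum
  refine CM_nonneg_of_mul (c := 2 * m) (by positivity) ?_
  convert h2Q using 2
  push_cast
  ring

end Helpers

/-- `M ≥ iK`: the complex Hermitian matrix `M - iK` is positive semidefinite. -/
def GeqI {m : Type*} [Fintype m] [DecidableEq m] (M K : Matrix m m ℝ) : Prop :=
  (M.map Complex.ofReal - Complex.I • K.map Complex.ofReal).PosSemidef

/-- Permutation invariance of a matrix on `ℝ^{2d} ⊗ ℝᵐ`. -/
def PermInvariant {d m : ℕ}
    (Γ : Matrix ((Fin d ⊕ Fin d) × Fin m) ((Fin d ⊕ Fin d) × Fin m) ℝ) : Prop :=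
  ∀ π : Equiv.Perm (Fin m),
    ((1 : Matrix (Fin d ⊕ Fin d) (Fin d ⊕ Fin d) ℝ) ⊗ₖ π.permMatrix ℝ) * Γ *
      ((1 : Matrix (Fin d ⊕ Fin d) (Fin d ⊕ Fin d) ℝ) ⊗ₖ π.permMatrix ℝ)ᵀ = Γ

/-- **Exchangeable CMs.** A permutation-invariant covariance matrix `Γ`
on `k` sites with on-site block `A` and inter-site block `B` extends to a
permutation-invariant covariance matrix `Γ'` on `n ≥ k` sites if and only if
`A + (n-1)B ≥ iJ`. -/
theorem exchangeable_CM_iff (d k n : ℕ) (hd : 0 < d) (hk : 2 ≤ k) (hkn : k ≤ n)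
    (J : Matrix (Fin d ⊕ Fin d) (Fin d ⊕ Fin d) ℝ)
    (hJ : J = Matrix.fromBlocks 0 (-1) 1 0)
    (Γ : Matrix ((Fin d ⊕ Fin d) × Fin k) ((Fin d ⊕ Fin d) × Fin k) ℝ)
    (hΓsymm : Γ.IsSymm) (hΓperm : PermInvariant Γ)
    (hΓCM : GeqI Γ (J ⊗ₖ (1 : Matrix (Fin k) (Fin k) ℝ)))
    (A B : Matrix (Fin d ⊕ Fin d) (Fin d ⊕ Fin d) ℝ)
    (hA : ∀ (α β : Fin d ⊕ Fin d) (i : Fin k), Γ (α, i) (β, i) = A α β)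
    (hB : ∀ (α β : Fin d ⊕ Fin d) (i j : Fin k), i ≠ j → Γ (α, i) (β, j) = B α β) :
    (∃ Γ' : Matrix ((Fin d ⊕ Fin d) × Fin n) ((Fin d ⊕ Fin d) × Fin n) ℝ,
      Γ'.IsSymm ∧ PermInvariant Γ' ∧
      GeqI Γ' (J ⊗ₖ (1 : Matrix (Fin n) (Fin n) ℝ)) ∧
      ∀ (α β : Fin d ⊕ Fin d) (i j : Fin k),
        Γ' (α, Fin.castLE hkn i) (β, Fin.castLE hkn j) = Γ (α, i) (β, j))
    ↔ GeqI (A + ((n : ℝ) - 1) • B) J := by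
  classical
  have hn : 0 < n := lt_of_lt_of_le (by omega) hkn
  have hn2 : 2 ≤ n := le_trans hk hkn
  -- distinguished indices
  set i0 : Fin k := ⟨0, by omega⟩ with hi0
  set i1 : Fin k := ⟨1, by omega⟩ with hi1
  have hi01 : i0 ≠ i1 := by simp [hi0, hi1, Fin.ext_iff]
  -- symmetry of J
  have hJt : Jᵀ = -J := by
    rw [hJ]
    simp [Matrix.fromBlocks_transpose, Matrix.fromBlocks_neg]
  -- symmetry of A and B
  have hΓ' : ∀ (p q : (Fin d ⊕ Fin d) × Fin k), Γ p q = Γ q p := by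
    intro p q
    have := congrFun (congrFun hΓsymm.eq q) p
    simpa [transpose_apply] using this
  have hAsymm : A.IsSymm := by
    ext α β
    rw [transpose_apply, ← hA β α i0, ← hA α β i0, hΓ']
  have hBsymm : B.IsSymm := by
    ext α β
    rw [transpose_apply, ← hB β α i0 i1 hi01, hΓ', hB α β i1 i0 (Ne.symm hi01)]
  -- complex blocks
  set Ad : Matrix (Fin d ⊕ Fin d) (Fin d ⊕ Fin d) ℂ := A.map Complex.ofReal - Complex.I • J.map Complex.ofReal with hAd
  set Bc : Matrix (Fin d ⊕ Fin d) (Fin d ⊕ Fin d) ℂ := B.map Complex.ofReal with hBc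
  set Cc : Matrix (Fin d ⊕ Fin d) (Fin d ⊕ Fin d) ℂ := Ad - Bc with hCc
  set Dc : Matrix (Fin d ⊕ Fin d) (Fin d ⊕ Fin d) ℂ :=
    (A + ((n : ℝ) - 1) • B).map Complex.ofReal - Complex.I • J.map Complex.ofReal with hDc
  have hCcBc : Cc + Bc = Ad := by rw [hCc]; abel
  have hCBe : ∀ α β : Fin d ⊕ Fin d,
      (Cc + Bc) α β = ((A α β : ℂ)) - Complex.I * (J α β) := by
    intro α β
    simp only [hCc, hAd, hBc, Matrix.add_apply, Matrix.sub_apply, Matrix.map_apply,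
      Matrix.smul_apply, smul_eq_mul]
    ring
  have hBce : ∀ α β : Fin d ⊕ Fin d, Bc α β = ((B α β : ℂ)) := by
    intro α β; simp [hBc]
  have hnB : (n : ℂ) • Bc = Dc - Cc := by
    ext α β
    simp only [hBc, hCc, hAd, hDc, Matrix.smul_apply, Matrix.sub_apply, Matrix.add_apply,
      Matrix.map_apply, Matrix.smul_apply, smul_eq_mul]
    push_cast
    ring
  -- Cc is PSD, from hΓCM
  have hCch : Cc.IsHermitian := by
    have h1 : (A - B).IsSymm := by
      rw [Matrix.IsSymm, Matrix.transpose_sub, hAsymm.eq, hBsymm.eq]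
    have := CM_herm_sub (A - B) J h1 hJt
    convert this using 1
    rw [hCc, hAd, hBc]
    ext α β
    simp [Matrix.map_apply]
    ring
  -- block structure of the k-site matrix
  have hSk : ∀ (α β : (Fin d ⊕ Fin d)) (i j : Fin k),
      (Γ.map Complex.ofReal -
        Complex.I • ((J ⊗ₖ (1 : Matrix (Fin k) (Fin k) ℝ)).map Complex.ofReal)) (α, i) (β, j)
      = (if i = j then Cc + Bc else Bc) α β := by
    intro α β i j
    by_cases h : i = j
    · subst h
      rw [if_pos rfl, hCBe]
      simp only [Matrix.sub_apply, Matrix.map_apply, Matrix.smul_apply, smul_eq_mul,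
        Matrix.kroneckerMap_apply, Matrix.one_apply, eq_self_iff_true, if_true, mul_one, hA α β i]
    · rw [if_neg h, hBce]
      simp only [Matrix.sub_apply, Matrix.map_apply, Matrix.smul_apply, smul_eq_mul,
        Matrix.kroneckerMap_apply, Matrix.one_apply, if_neg h, mul_zero,
        Complex.ofReal_zero, sub_zero, hB α β i j h]
  have hCcpsd : Cc.PosSemidef := by
    refine Matrix.PosSemidef.of_dotProduct_mulVec_nonneg hCch fun u => ?_
    set x : (Fin d ⊕ Fin d) × Fin k → ℂ := fun p => if p.2 = i0 then u p.1 else if p.2 = i1 then -u p.1 else 0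
      with hx
    have hq := Matrix.PosSemidef.dotProduct_mulVec_nonneg hΓCM x
    rw [CM_blockQF _ (fun i j => if i = j then Cc + Bc else Bc) hSk x] at hq
    -- the vector family
    have hx0 : (fun α => x (α, i0)) = u := by funext α; simp [hx]
    have hx1 : (fun α => x (α, i1)) = -u := by funext α; simp [hx, hi01.symm]
    have hxz : ∀ i : Fin k, i ≠ i0 → i ≠ i1 → (fun α => x (α, i)) = 0 := by
      intro i h0 h1; funext α; simp [hx, h0, h1]
    have hzero : ∀ i : Fin k, i ∉ ({i0, i1} : Finset (Fin k)) →
        ∑ j, star (fun α => x (α, i)) ⬝ᵥ (if i = j then Cc + Bc else Bc) *ᵥ (fun β => x (β, j))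
          = 0 := by
      intro i hi
      simp only [Finset.mem_insert, Finset.mem_singleton] at hi
      push_neg at hi
      rw [hxz i hi.1 hi.2]
      simp
    have hzero2 : ∀ (i : Fin k) (j : Fin k), j ≠ i0 → j ≠ i1 →
        star (fun α => x (α, i)) ⬝ᵥ (if i = j then Cc + Bc else Bc) *ᵥ (fun β => x (β, j))
          = 0 := by
      intro i j h0 h1
      rw [hxz j h0 h1]
      simp
    -- restrict the double sum to {i0, i1} × {i0, i1}
    have hpair : ({i0, i1} : Finset (Fin k)) ⊆ Finset.univ := Finset.subset_univ _
    rw [← Finset.sum_subset hpair (fun i _ hi => hzero i hi)] at hq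
    have hinner : ∀ i : Fin k,
        ∑ j, star (fun α => x (α, i)) ⬝ᵥ (if i = j then Cc + Bc else Bc) *ᵥ (fun β => x (β, j))
        = ∑ j ∈ ({i0, i1} : Finset (Fin k)),
            star (fun α => x (α, i)) ⬝ᵥ (if i = j then Cc + Bc else Bc) *ᵥ (fun β => x (β, j)) := by
      intro i
      rw [← Finset.sum_subset hpair (fun j _ hj => by
        simp only [Finset.mem_insert, Finset.mem_singleton] at hj
        push_neg at hj
        exact hzero2 i j hj.1 hj.2)]
    simp only [hinner] at hq
    rw [Finset.sum_pair hi01] at hq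
    rw [Finset.sum_pair hi01, Finset.sum_pair hi01] at hq
    rw [hx0, hx1] at hq
    simp only [eq_self_iff_true, if_true, if_neg hi01, if_neg hi01.symm, star_neg,
      neg_dotProduct, Matrix.mulVec_neg, dotProduct_neg, neg_neg] at hq
    have hCBv : star u ⬝ᵥ (Cc + Bc) *ᵥ u = star u ⬝ᵥ Cc *ᵥ u + star u ⬝ᵥ Bc *ᵥ u := by
      rw [Matrix.add_mulVec, dotProduct_add]
    rw [hCBv] at hq
    have hqq : 0 ≤ (2 : ℂ) * (star u ⬝ᵥ Cc *ᵥ u) := by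
      convert hq using 1
      ring
    have h2 : ((2 : ℝ) : ℂ) = (2 : ℂ) := by norm_num
    exact CM_nonneg_of_mul (c := 2) (by norm_num) (by rw [h2]; exact hqq)
  constructor
  · -- forward direction
    rintro ⟨Γ', hsym', hperm', hCM', hsub'⟩
    set i0' : Fin n := Fin.castLE hkn i0 with hi0'
    set i1' : Fin n := Fin.castLE hkn i1 with hi1'
    have hi01' : i0' ≠ i1' := by
      simp only [hi0', hi1', ne_eq, Fin.castLE_inj]
      exact hi01
    have hpe : ∀ (σ : Equiv.Perm (Fin n)) (α β : (Fin d ⊕ Fin d)) (i j : Fin n),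
        Γ' (α, σ i) (β, σ j) = Γ' (α, i) (β, j) := by
      intro σ α β i j
      have := congrFun (congrFun (hperm' σ) (α, i)) (β, j)
      rw [← this, CM_perm_entry]
    have hA' : ∀ (α β : (Fin d ⊕ Fin d)) (i : Fin n), Γ' (α, i) (β, i) = A α β := by
      intro α β i
      have h1 : Γ' (α, i) (β, i) = Γ' (α, i0') (β, i0') := by
        have := hpe (Equiv.swap i0' i) α β i0' i0'
        rwa [Equiv.swap_apply_left] at this
      rw [h1, hi0', hsub' α β i0 i0, hA]
    have hB' : ∀ (α β : (Fin d ⊕ Fin d)) (i j : Fin n), i ≠ j → Γ' (α, i) (β, j) = B α β := by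
      intro α β i j hij
      obtain ⟨σ, hσ1, hσ2⟩ := CM_exists_perm_pair i0' i1' i j hi01' hij
      have h1 : Γ' (α, i) (β, j) = Γ' (α, i0') (β, i1') := by
        rw [← hσ1, ← hσ2, hpe]
      rw [h1, hi0', hi1', hsub' α β i0 i1, hB α β i0 i1 hi01]
    -- block structure of the n-site matrix
    have hSn : ∀ (α β : (Fin d ⊕ Fin d)) (i j : Fin n),
        (Γ'.map Complex.ofReal -
          Complex.I • ((J ⊗ₖ (1 : Matrix (Fin n) (Fin n) ℝ)).map Complex.ofReal)) (α, i) (β, j)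
        = (if i = j then Cc + Bc else Bc) α β := by
      intro α β i j
      by_cases h : i = j
      · subst h
        rw [if_pos rfl, hCBe]
        simp only [Matrix.sub_apply, Matrix.map_apply, Matrix.smul_apply, smul_eq_mul,
          Matrix.kroneckerMap_apply, Matrix.one_apply, eq_self_iff_true, if_true, mul_one, hA' α β i]
      · rw [if_neg h, hBce]
        simp only [Matrix.sub_apply, Matrix.map_apply, Matrix.smul_apply, smul_eq_mul,
          Matrix.kroneckerMap_apply, Matrix.one_apply, if_neg h, mul_zero,
          Complex.ofReal_zero, sub_zero, hB' α β i j h]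
    refine Matrix.PosSemidef.of_dotProduct_mulVec_nonneg ?_ ?_
    · -- Hermitian
      have h1 : (A + ((n : ℝ) - 1) • B).IsSymm := by
        rw [Matrix.IsSymm, Matrix.transpose_add, Matrix.transpose_smul, hAsymm.eq, hBsymm.eq]
      exact CM_herm_sub _ _ h1 hJt
    · -- quadratic form
      intro u
      set x : (Fin d ⊕ Fin d) × Fin n → ℂ := fun p => u p.1 with hx
      have hq := Matrix.PosSemidef.dotProduct_mulVec_nonneg hCM' x
      rw [CM_blockQF _ (fun i j => if i = j then Cc + Bc else Bc) hSn x] at hq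
      have hxc : ∀ i : Fin n, (fun α => x (α, i)) = u := by intro i; funext α; simp [hx]
      simp only [hxc] at hq
      have hqAd : ∀ i : Fin n,
          ∑ j, star u ⬝ᵥ (if i = j then Cc + Bc else Bc) *ᵥ u
          = star u ⬝ᵥ (Cc + Bc) *ᵥ u + ((n : ℂ) - 1) * (star u ⬝ᵥ Bc *ᵥ u) := by
        intro i
        have h2 : ∀ j : Fin n, star u ⬝ᵥ (if i = j then Cc + Bc else Bc) *ᵥ u
            = (if i = j then star u ⬝ᵥ (Cc + Bc) *ᵥ u - star u ⬝ᵥ Bc *ᵥ u else 0)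
              + star u ⬝ᵥ Bc *ᵥ u := by
          intro j
          by_cases h : i = j
          · subst h; simp
          · simp [h]
        simp only [h2, Finset.sum_add_distrib, Finset.sum_ite_eq, Finset.mem_univ, if_true,
          Finset.sum_const, Finset.card_univ, Fintype.card_fin, nsmul_eq_mul]
        ring
      simp only [hqAd, Finset.sum_const, Finset.card_univ, Fintype.card_fin,
        nsmul_eq_mul] at hq
      -- hq : 0 ≤ n * (q(Cc+Bc) + (n-1) q(Bc))
      have hDce : star u ⬝ᵥ Dc *ᵥ u
          = star u ⬝ᵥ (Cc + Bc) *ᵥ u + ((n : ℂ) - 1) * (star u ⬝ᵥ Bc *ᵥ u) := by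
        have hDd : Dc = (Cc + Bc) + ((n : ℂ) - 1) • Bc := by
          ext α β
          rw [hCcBc]
          simp only [hDc, hCcBc, hAd, hBc, Matrix.add_apply, Matrix.smul_apply,
            Matrix.sub_apply, Matrix.map_apply, smul_eq_mul]
          push_cast
          ring
        rw [hDd, Matrix.add_mulVec, dotProduct_add, Matrix.smul_mulVec,
          dotProduct_smul, smul_eq_mul]
      rw [← hDce] at hq
      exact CM_nonneg_of_mul (c := n) (by exact_mod_cast hn) (by push_cast; exact hq)
  · -- backward direction
    intro hDpsd
    have hDcpsd : Dc.PosSemidef := hDpsd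
    set Γ'0 : Matrix ((Fin d ⊕ Fin d) × Fin n) ((Fin d ⊕ Fin d) × Fin n) ℝ :=
      Matrix.of fun p q => if p.2 = q.2 then A p.1 q.1 else B p.1 q.1 with hΓ'0
    have hG0 : ∀ (α β : Fin d ⊕ Fin d) (i j : Fin n),
        Γ'0 (α, i) (β, j) = if i = j then A α β else B α β := by
      intro α β i j; simp [hΓ'0]
    have hMsymm : Γ'0.IsSymm := by
      ext ⟨α, i⟩ ⟨β, j⟩
      rw [transpose_apply, hG0, hG0]
      by_cases h : i = j
    -- diagonal case
      · subst h
        rw [if_pos rfl, if_pos rfl]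
        have := congrFun (congrFun hAsymm.eq α) β
        simpa [transpose_apply] using this
      · rw [if_neg (Ne.symm h), if_neg h]
        have := congrFun (congrFun hBsymm.eq α) β
        simpa [transpose_apply] using this
    refine ⟨Γ'0, hMsymm, ?_, ?_, ?_⟩
    · -- permutation invariant
      intro σ
      ext ⟨α, i⟩ ⟨β, j⟩
      rw [CM_perm_entry, hG0, hG0]
      by_cases h : i = j
      · subst h; simp
      · have h2 : σ i ≠ σ j := fun hc => h (σ.injective hc)
        rw [if_neg h, if_neg h2]
    · -- GeqI
      refine Matrix.PosSemidef.of_dotProduct_mulVec_nonneg (CM_herm_sub _ _ hMsymm ?_) ?_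
      · rw [← Matrix.kroneckerMap_transpose, hJt, Matrix.transpose_one]
        ext ⟨α, i⟩ ⟨β, j⟩
        simp [Matrix.kroneckerMap_apply]
      · intro x
        have hSn' : ∀ (α β : Fin d ⊕ Fin d) (i j : Fin n),
            (Γ'0.map Complex.ofReal -
              Complex.I • ((J ⊗ₖ (1 : Matrix (Fin n) (Fin n) ℝ)).map Complex.ofReal))
                (α, i) (β, j)
            = (if i = j then Cc + Bc else Bc) α β := by
          intro α β i j
          by_cases h : i = j
          · subst h
            rw [if_pos rfl, hCBe]
            simp only [Matrix.sub_apply, Matrix.map_apply, Matrix.smul_apply, smul_eq_mul,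
              Matrix.kroneckerMap_apply, Matrix.one_apply, eq_self_iff_true, if_true, mul_one, hG0,
              if_pos rfl]
          · rw [if_neg h, hBce]
            simp only [Matrix.sub_apply, Matrix.map_apply, Matrix.smul_apply, smul_eq_mul,
              Matrix.kroneckerMap_apply, Matrix.one_apply, if_neg h, mul_zero,
              Complex.ofReal_zero, sub_zero, hG0]
        rw [CM_blockQF _ (fun i j => if i = j then Cc + Bc else Bc) hSn' x]
        exact CM_key_nonneg hn Cc Dc Bc hCcpsd hDcpsd hnB (fun i α => x (α, i))
    · -- sub-block
      intro α β i j
      rw [hG0]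
      by_cases h : i = j
      · subst h; rw [if_pos rfl, hA]
      · rw [if_neg (by simpa using h), hB α β i j h]
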